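/- arXiv:2103.10575 — 7 statements merged into one kernel-verified Lean document; each statement's English description precedes it below -/
import Mathlib

section
/- Let A, B, C be k×k matrices over a field (or commutative ring), with Ā = A - I. Suppose Ā, (Ā - B Ā⁻¹ C), and H = Ā - C Ā⁻¹ B - (B - C Ā⁻¹ C)(Ā - B Ā⁻¹ C)⁻¹(C - B Ā⁻¹ B) are invertible. Define D = (B - C Ā⁻¹ C)(Ā - B Ā⁻¹ C)⁻¹ B Ā⁻¹ - C Ā⁻¹, Z = H⁻¹ D, Y = -(Ā - B Ā⁻¹ C)⁻¹ (C - B Ā⁻¹ B) Z - (Ā - B Ā⁻¹ C)⁻¹ B Ā⁻¹, and X = Ā⁻¹ (I - B Z - C Y). Then Ā X + B Z + C Y = I, C X + Ā Z + B Y = 0, and B X + C Z + Ā Y = 0; consequently the block matrix [[X,Y,Z],[Z,X,Y],[Y,Z,X]] is the inverse of -[[I-A, -B, -C],[-C, I-A, -B],[-B, -C, I-A]] in block form, i.e. [[Ā,B,C],[C,Ā,B],[B,C,Ā]] · [[X,Y,Z],[Z,X,Y],[Y,Z,X]] = I. -/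
/-- The 3k × 3k block-circulant matrix with block rows (A, B, C), (C, A, B), (B, C, A). -/
def blockCirc {K : Type*} [Field K] {k : ℕ} (A B C : Matrix (Fin k) (Fin k) K) :
    Matrix (Fin 3 × Fin k) (Fin 3 × Fin k) K :=
  fun p q => (![![A, B, C], ![C, A, B], ![B, C, A]] p.1 q.1) p.2 q.2

lemma blockCirc_mul {K : Type*} [Field K] {k : ℕ} (A B C X Y Z : Matrix (Fin k) (Fin k) K) :
    blockCirc A B C * blockCirc X Y Z =
      blockCirc (A*X+B*Z+C*Y) (A*Y+B*X+C*Z) (A*Z+B*Y+C*X) := by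
  ext ⟨i, x⟩ ⟨j, y⟩
  simp only [Matrix.mul_apply, blockCirc, Fintype.sum_prod_type, Fin.sum_univ_three]
  fin_cases i <;> fin_cases j <;>
    simp [Matrix.mul_apply, Matrix.add_apply] <;> abel

lemma blockCirc_one {K : Type*} [Field K] {k : ℕ} :
    blockCirc (1 : Matrix (Fin k) (Fin k) K) 0 0 = 1 := by
  ext ⟨i, x⟩ ⟨j, y⟩
  fin_cases i <;> fin_cases j <;>
    simp [blockCirc, Matrix.one_apply, Prod.ext_iff, Matrix.vecHead, Matrix.vecTail]

theorem fast_inversion {K : Type*} [Field K] {k : ℕ}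
    (A B C : Matrix (Fin k) (Fin k) K)
    (Abar : Matrix (Fin k) (Fin k) K) (hAbar : Abar = A - 1)
    (hA : IsUnit Abar.det)
    (hABC : IsUnit (Abar - B * Abar⁻¹ * C).det)
    (H : Matrix (Fin k) (Fin k) K)
    (hH : H = Abar - C * Abar⁻¹ * B -
      (B - C * Abar⁻¹ * C) * (Abar - B * Abar⁻¹ * C)⁻¹ * (C - B * Abar⁻¹ * B))
    (hHinv : IsUnit H.det)
    (D : Matrix (Fin k) (Fin k) K)
    (hD : D = (B - C * Abar⁻¹ * C) * (Abar - B * Abar⁻¹ * C)⁻¹ * B * Abar⁻¹ - C * Abar⁻¹)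
    (Z : Matrix (Fin k) (Fin k) K) (hZ : Z = H⁻¹ * D)
    (Y : Matrix (Fin k) (Fin k) K)
    (hY : Y = -((Abar - B * Abar⁻¹ * C)⁻¹ * (C - B * Abar⁻¹ * B) * Z) -
      (Abar - B * Abar⁻¹ * C)⁻¹ * B * Abar⁻¹)
    (X : Matrix (Fin k) (Fin k) K) (hX : X = Abar⁻¹ * (1 - B * Z - C * Y)) :
    Abar * X + B * Z + C * Y = 1 ∧
    C * X + Abar * Z + B * Y = 0 ∧
    B * X + C * Z + Abar * Y = 0 ∧
    blockCirc Abar B C * blockCirc X Y Z = 1 := by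
  have hAa : Abar * Abar⁻¹ = 1 := Matrix.mul_nonsing_inv _ hA
  have hS : (Abar - B * Abar⁻¹ * C) * (Abar - B * Abar⁻¹ * C)⁻¹ = 1 :=
    Matrix.mul_nonsing_inv _ hABC
  have hHZ : H * Z = D := by
    rw [hZ, ← mul_assoc, Matrix.mul_nonsing_inv _ hHinv, one_mul]
  have e1 : Abar * X + B * Z + C * Y = 1 := by
    rw [hX, ← mul_assoc, hAa, one_mul]; noncomm_ring
  have e2 : C * X + Abar * Z + B * Y = 0 := by
    have : C * X + Abar * Z + B * Y = H * Z - D := by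
      rw [hX, hY, hH, hD]; noncomm_ring
    rw [this, hHZ, sub_self]
  have hSY : (Abar - B * Abar⁻¹ * C) * Y =
      -((C - B * Abar⁻¹ * B) * Z) - B * Abar⁻¹ := by
    rw [hY, mul_sub, mul_neg]
    simp only [← mul_assoc]
    rw [hS, one_mul, one_mul]
  have hAY : Abar * Y = B * Abar⁻¹ * C * Y - (C - B * Abar⁻¹ * B) * Z - B * Abar⁻¹ := by
    have := hSY
    rw [sub_mul] at this
    linear_combination (norm := noncomm_ring) this
  have e3 : B * X + C * Z + Abar * Y = 0 := by
    rw [hX, hAY]; noncomm_ring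
  refine ⟨e1, e2, e3, ?_⟩
  rw [blockCirc_mul]
  have p2 : Abar * Y + B * X + C * Z = 0 := by linear_combination (norm := noncomm_ring) e3
  have p3 : Abar * Z + B * Y + C * X = 0 := by linear_combination (norm := noncomm_ring) e2
  rw [e1, p2, p3, blockCirc_one]
end

section
/- For every real θ, letting z = exp(iθ) ∈ ℂ, one has |−z³/8 + z²/4 − 3z⁴/(16 + 8z)|² = (sin θ)² / (5 + 4·cos θ). -/
theorem u4_abs_sq (θ : ℝ) :
    (‖-(Complex.exp (θ * Complex.I)) ^ 3 / 8 +
      (Complex.exp (θ * Complex.I)) ^ 2 / 4 -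
      3 * (Complex.exp (θ * Complex.I)) ^ 4 / (16 + 8 * Complex.exp (θ * Complex.I))‖) ^ 2
    = (Real.sin θ) ^ 2 / (5 + 4 * Real.cos θ) := by
  set c := Real.cos θ with hc
  set s := Real.sin θ with hs
  have hc1 : -1 ≤ c := Real.neg_one_le_cos θ
  have hsc : s ^ 2 + c ^ 2 = 1 := Real.sin_sq_add_cos_sq θ
  have he : Complex.exp (θ * Complex.I) = (c : ℂ) + (s : ℂ) * Complex.I := by
    rw [Complex.exp_mul_I, ← Complex.ofReal_cos, ← Complex.ofReal_sin]
  set z : ℂ := (c : ℂ) + (s : ℂ) * Complex.I with hz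
  have h2 : (2 : ℂ) + z ≠ 0 := by
    intro h
    have hre : ((2 : ℂ) + z).re = 0 := by rw [h]; simp
    simp [hz, Complex.add_re] at hre
    nlinarith
  have hD : (16 : ℂ) + 8 * z ≠ 0 := by
    intro h
    apply h2
    have : (16 : ℂ) + 8 * z = 8 * (2 + z) := by ring
    rw [this] at h
    have := mul_eq_zero.mp h
    rcases this with h8 | hok
    · norm_num at h8
    · rw [hok]
  have hE : -(z) ^ 3 / 8 + z ^ 2 / 4 - 3 * z ^ 4 / (16 + 8 * z)
      = z ^ 2 * (1 - z ^ 2) / (2 * (2 + z)) := by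
    rw [show (16 : ℂ) + 8 * z = 8 * (2 + z) by ring]
    field_simp
    ring
  rw [he, hE, Complex.sq_norm, Complex.normSq_div]
  have h5 : (0:ℝ) < 5 + 4 * c := by nlinarith
  have hnum : Complex.normSq (z ^ 2 * (1 - z ^ 2)) = 4 * s ^ 2 := by
    simp only [hz, pow_two, Complex.normSq_apply, Complex.mul_re, Complex.mul_im,
      Complex.add_re, Complex.add_im, Complex.sub_re, Complex.sub_im, Complex.one_re,
      Complex.one_im, Complex.ofReal_re, Complex.ofReal_im, Complex.I_re, Complex.I_im]
    linear_combination (8*s^2 + 4*s^2*(s^2+c^2-1) + (s^2+c^2-1)*(s^2+c^2)^2) * hsc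
  have hden : Complex.normSq (2 * (2 + z)) = 4 * (5 + 4 * c) := by
    simp [hz, Complex.normSq_apply, Complex.add_re, Complex.add_im, Complex.mul_re,
      Complex.mul_im]
    nlinarith [hsc]
  rw [hden, hnum]
  rw [div_eq_div_iff (by positivity) (ne_of_gt h5)]
  ring
end

section
/- For every real θ, letting z = exp(iθ) ∈ ℂ, one has |z³/8 + z²/4 + 3z⁴/(16 + 8z)|² = 1/4 − (sin θ)² / (5 + 4·cos θ). -/
theorem u5_abs_sq (θ : ℝ) :
    (‖(Complex.exp (θ * Complex.I)) ^ 3 / 8 +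
      (Complex.exp (θ * Complex.I)) ^ 2 / 4 +
      3 * (Complex.exp (θ * Complex.I)) ^ 4 / (16 + 8 * Complex.exp (θ * Complex.I))‖) ^ 2
    = 1 / 4 - (Real.sin θ) ^ 2 / (5 + 4 * Real.cos θ) := by
  set z := Complex.exp ((θ : ℂ) * Complex.I) with hzdef
  set c := Real.cos θ with hc
  set s := Real.sin θ with hs
  have habs : ‖z‖ = 1 := Complex.norm_exp_ofReal_mul_I θ
  have hz : z = (c : ℂ) + (s : ℂ) * Complex.I := by
    rw [hzdef, Complex.exp_mul_I, ← Complex.ofReal_cos, ← Complex.ofReal_sin]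
  have hpyth : s ^ 2 + c ^ 2 = 1 := Real.sin_sq_add_cos_sq θ
  have hpythC : (s : ℂ) ^ 2 + (c : ℂ) ^ 2 = 1 := by exact_mod_cast hpyth
  have h2z : (2 : ℂ) + z ≠ 0 := by
    intro h
    have hzval : z = -2 := by linear_combination h
    rw [hzval] at habs
    simp at habs
  have h16 : (16 : ℂ) + 8 * z ≠ 0 := by
    intro h
    apply h2z
    linear_combination h / 8
  have hzz : z ^ 2 + z + 1 = z * (1 + 2 * (c : ℂ)) := by
    rw [hz]
    linear_combination (s : ℂ) ^ 2 * Complex.I_sq - hpythC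
  have e0 : z ^ 3 / 8 + z ^ 2 / 4 + 3 * z ^ 4 / (16 + 8 * z)
      = z ^ 2 * (z ^ 2 + z + 1) / (2 * (2 + z)) := by
    rw [show (16 : ℂ) + 8 * z = 8 * (2 + z) by ring]
    field_simp
    ring
  have e1 : z ^ 3 / 8 + z ^ 2 / 4 + 3 * z ^ 4 / (16 + 8 * z)
      = z ^ 3 * ((1 + 2 * c : ℝ) : ℂ) / (2 * (2 + z)) := by
    rw [e0, hzz]
    push_cast
    ring
  have habs2 : ‖2 + z‖ ^ 2 = 5 + 4 * c := by
    rw [Complex.sq_norm, hz, Complex.normSq_apply]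
    simp
    nlinarith [hpyth]
  have h5 : (0 : ℝ) < 5 + 4 * c := by
    have := Real.neg_one_le_cos θ
    rw [← hc] at this
    linarith
  rw [e1, norm_div, norm_mul, norm_pow, habs, Complex.norm_real, Real.norm_eq_abs, norm_mul,
    Complex.norm_two]
  rw [div_pow, mul_pow]
  simp only [one_pow, one_mul]
  rw [sq_abs, mul_pow, habs2]
  have h5' : (5 + c * 4 : ℝ) ≠ 0 := by linarith
  field_simp
  nlinarith [hpyth]
end

section
/- For every real θ, letting z = exp(iθ) ∈ ℂ, one has |z³/8 − z²/4 − z⁴/(16 + 8z)|² = 1 / (4·(5 + 4·cos θ)). -/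
theorem u6_abs_sq (θ : ℝ) :
    (‖(Complex.exp (θ * Complex.I)) ^ 3 / 8 -
      (Complex.exp (θ * Complex.I)) ^ 2 / 4 -
      (Complex.exp (θ * Complex.I)) ^ 4 / (16 + 8 * Complex.exp (θ * Complex.I))‖) ^ 2
    = 1 / (4 * (5 + 4 * Real.cos θ)) := by
  set z : ℂ := Complex.exp (θ * Complex.I) with hzdef
  have hz : ‖z‖ = 1 := Complex.norm_exp_ofReal_mul_I θ
  have h2 : (2 : ℂ) + z ≠ 0 := by
    intro h
    have : z = -2 := by linear_combination h
    rw [this] at hz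
    simp at hz
  have h16 : (16 : ℂ) + 8 * z ≠ 0 := by
    intro h
    apply h2
    have : (8:ℂ) * ((2:ℂ) + z) = 0 := by linear_combination h
    simpa using this
  have key : z ^ 3 / 8 - z ^ 2 / 4 - z ^ 4 / (16 + 8 * z) = -(z ^ 2) / (2 * (2 + z)) := by
    rw [show (16 : ℂ) + 8 * z = 8 * (2 + z) by ring]
    field_simp
    ring
  rw [key]
  rw [norm_div, norm_mul, norm_neg, norm_pow, hz]
  have habs2 : (‖(2:ℂ) + z‖) ^ 2 = 5 + 4 * Real.cos θ := by
    rw [Complex.sq_norm, Complex.normSq_apply]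
    have : z = Real.cos θ + Real.sin θ * Complex.I := by
      rw [hzdef, Complex.exp_mul_I]
      simp [← Complex.ofReal_cos, ← Complex.ofReal_sin]
    rw [this]
    simp [Complex.add_re, Complex.add_im, Complex.mul_re, Complex.mul_im,
      Complex.I_re, Complex.I_im, Complex.ofReal_re, Complex.ofReal_im, Complex.cos_ofReal_re, Complex.sin_ofReal_re]
    nlinarith [Real.sin_sq_add_cos_sq θ]
  have hpos : (0:ℝ) < ‖(2:ℂ) + z‖ := by
    simpa using (norm_pos_iff.mpr h2)
  rw [div_pow, mul_pow, habs2]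
  norm_num
end

section
/- The integral (1/(2π)) ∫₀^{2π} 1 / (4·|e^{3iθ} − e^{2iθ} − 4|²) dθ equals 19/1056. -/
open Complex

private lemma aux_ne (z : ℂ) (hz : ‖z‖ = 1) : z ^ 3 - z ^ 2 - 4 ≠ 0 := by
  intro h
  have h4 : z ^ 3 - z ^ 2 = 4 := by linear_combination h
  have habs : ‖z ^ 3 - z ^ 2‖ = 4 := by rw [h4]; simp
  have tri := norm_sub_le (z ^ 3) (z ^ 2)
  simp only [norm_pow, hz] at tri
  rw [habs] at tri; norm_num at tri

private lemma aux_one_sub (ρ x : ℂ) (hρ : ‖ρ‖ ≤ 3/4) (hx : ‖x‖ = 1) :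
    (1 : ℂ) - ρ * x ≠ 0 := by
  intro h
  have h1 : ρ * x = 1 := by linear_combination -h
  have : ‖ρ * x‖ = 1 := by rw [h1]; simp
  rw [norm_mul, hx, mul_one] at this
  rw [this] at hρ; norm_num at hρ

private lemma aux_sub_ne (a ρ x : ℂ) (hρ : ‖ρ‖ + 1 ≤ a.re)
    (hx : ‖x‖ = 1) : a - ρ * x ≠ 0 := by
  intro h
  have h1 : a = ρ * x := by linear_combination h
  have h2 : ‖a‖ = ‖ρ‖ := by rw [h1, norm_mul, hx, mul_one]
  have h3 : a.re ≤ ‖a‖ := Complex.re_le_norm a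
  rw [h2] at h3
  linarith

private lemma hasDerivAt_logterm (a ρ c : ℂ) (hρ : ‖ρ‖ + 1 ≤ a.re)
    (habs : ∀ t : ℝ, ‖Complex.exp ((t : ℂ) * c)‖ = 1) (θ : ℝ) :
    HasDerivAt (fun t : ℝ => Complex.log (a - ρ * Complex.exp ((t : ℂ) * c)))
      (-(ρ * (1 * c * Complex.exp ((θ : ℂ) * c))) / (a - ρ * Complex.exp ((θ : ℂ) * c))) θ := by
  have h1 : HasDerivAt (fun t : ℝ => ((t : ℝ) : ℂ)) ((1 : ℝ) : ℂ) θ :=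
    (hasDerivAt_id θ).ofReal_comp
  have he : HasDerivAt (fun t : ℝ => Complex.exp ((t : ℂ) * c))
      (1 * c * Complex.exp ((θ : ℂ) * c)) θ := by
    simpa [mul_comm] using (h1.mul_const c).cexp
  have hf : HasDerivAt (fun t : ℝ => a - ρ * Complex.exp ((t : ℂ) * c))
      (-(ρ * (1 * c * Complex.exp ((θ : ℂ) * c)))) θ := (he.const_mul ρ).const_sub a
  refine hf.clog_real ?_
  refine Complex.mem_slitPlane_iff.2 (Or.inl ?_)
  have hre : (ρ * Complex.exp ((θ : ℂ) * c)).re ≤ ‖ρ‖ := by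
    calc (ρ * Complex.exp ((θ : ℂ) * c)).re ≤ ‖ρ * Complex.exp ((θ : ℂ) * c)‖ :=
          Complex.re_le_norm _
    _ = ‖ρ‖ := by rw [norm_mul, habs θ, mul_one]
  simp only [Complex.sub_re]
  linarith

private lemma aux_z_ne (θ : ℝ) :
    Complex.exp (3 * θ * Complex.I) - Complex.exp (2 * θ * Complex.I) - 4 ≠ 0 := by
  have h := aux_ne (Complex.exp ((θ : ℂ) * Complex.I)) (Complex.norm_exp_ofReal_mul_I θ)
  have e3 : Complex.exp (3 * (θ : ℂ) * Complex.I) = Complex.exp ((θ : ℂ) * Complex.I) ^ 3 := by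
    rw [show (3 : ℂ) * θ * Complex.I = θ * Complex.I + (θ * Complex.I + θ * Complex.I) by ring,
      Complex.exp_add, Complex.exp_add]; ring
  have e2 : Complex.exp (2 * (θ : ℂ) * Complex.I) = Complex.exp ((θ : ℂ) * Complex.I) ^ 2 := by
    rw [show (2 : ℂ) * θ * Complex.I = θ * Complex.I + θ * Complex.I by ring,
      Complex.exp_add]; ring
  rw [e3, e2]; exact h

set_option maxHeartbeats 2000000 in
private lemma key (u v w : ℂ) (huv : u * v = 1) (hw : w ^ 2 = -7)
    (h1 : (2 : ℂ) - v ≠ 0) (h2 : (4 : ℂ) - (-1 + w) * v ≠ 0)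
    (h3 : (4 : ℂ) - (-1 - w) * v ≠ 0)
    (h4 : (2 : ℂ) - u ≠ 0) (h5 : (4 : ℂ) - (-1 + w) * u ≠ 0)
    (h6 : (4 : ℂ) - (-1 - w) * u ≠ 0)
    (h7 : u ^ 3 - u ^ 2 - 4 ≠ 0) (h8 : v ^ 3 - v ^ 2 - 4 ≠ 0) :
    19/1056
      + (1/264) * v / (2 - v)
      + (5/704 - w/4928) * ((-1 + w) * v) / (4 - (-1 + w) * v)
      + (5/704 + w/4928) * ((-1 - w) * v) / (4 - (-1 - w) * v)
      + (1/264) * u / (2 - u)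
      + (5/704 + w/4928) * ((-1 - w) * u) / (4 - (-1 - w) * u)
      + (5/704 - w/4928) * ((-1 + w) * u) / (4 - (-1 + w) * u)
      = 1 / (4 * ((u ^ 3 - u ^ 2 - 4) * (v ^ 3 - v ^ 2 - 4))) := by
  have hd : (1056 * (264 * (2 - v)) * (704 * 4928 * (4 - (-1 + w) * v)) *
      (704 * 4928 * (4 - (-1 - w) * v)) : ℂ) ≠ 0 := by
    refine mul_ne_zero (mul_ne_zero (mul_ne_zero (by norm_num) (mul_ne_zero (by norm_num) h1))
      (mul_ne_zero (by norm_num) h2)) (mul_ne_zero (by norm_num) h3)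
  have h2' : (4:ℂ) - v * (-1 + w) ≠ 0 := by rwa [mul_comm] at h2
  have h3' : (4:ℂ) - v * (-1 - w) ≠ 0 := by rwa [mul_comm] at h3
  have h7' : u ^ 2 * (u - 1) - 4 ≠ 0 := by intro h; apply h7; linear_combination h
  have h8' : v ^ 2 * (v - 1) - 4 ≠ 0 := by intro h; apply h8; linear_combination h
  field_simp
  have hDfull : (1056 * (264 * (2 - v)) * (704 * 4928 * (4 - (-1 + w) * v)) *
        (704 * 4928 * (4 - (-1 - w) * v)) * (264 * (2 - u)) *
        (704 * 4928 * (4 - (-1 - w) * u)) * (704 * 4928 * (4 - (-1 + w) * u)) : ℂ) ≠ 0 := by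
    refine mul_ne_zero (mul_ne_zero (mul_ne_zero hd (mul_ne_zero (by norm_num) h4))
      (mul_ne_zero (by norm_num) h6)) (mul_ne_zero (by norm_num) h5)
  linear_combination (1 / (11023867934530540142592 : ℂ)) * (((-767352441421587994769646006829056 : ℂ) * u ^ 5 * v ^ 5 * w ^ 4 + (1534704882843175989539292013658112 : ℂ) * u ^ 5 * v ^ 5 * w ^ 2 + (-767352441421587994769646006829056 : ℂ) * u ^ 5 * v ^ 5 + (2048196366200479234159581446799360 : ℂ) * u ^ 5 * v ^ 4 * w ^ 4 + (-311556630351622193365119431344128 : ℂ) * u ^ 5 * v ^ 4 * w ^ 2 + (-1736639735848857040794462015455232 : ℂ) * u ^ 5 * v ^ 4 + (-1419313538268501103107766298345472 : ℂ) * u ^ 5 * v ^ 3 * w ^ 4 + (-3346348992665571706514245744066560 : ℂ) * u ^ 5 * v ^ 3 * w ^ 2 + (4765662530934072809622012042412032 : ℂ) * u ^ 5 * v ^ 3 + (3207879379175961842796414885691392 : ℂ) * u ^ 5 * v ^ 2 * w ^ 4 + (-4015618791198686047817094892879872 : ℂ) * u ^ 5 * v ^ 2 * w ^ 2 + (807739412022724205020680007188480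 : ℂ) * u ^ 5 * v ^ 2 + (-5123375699115564957559741759881216 : ℂ) * u ^ 5 * v * w ^ 4 + (-4892593009966215184696690329255936 : ℂ) * u ^ 5 * v * w ^ 2 + (10015968709081780142256432089137152 : ℂ) * u ^ 5 * v + (553878453958439454871323433500672 : ℂ) * u ^ 5 * w ^ 4 + (8492802960696071641360292647010304 : ℂ) * u ^ 5 * w ^ 2 + (-9046681414654511096231616080510976 : ℂ) * u ^ 5 + (2048196366200479234159581446799360 : ℂ) * u ^ 4 * v ^ 5 * w ^ 4 + (-311556630351622193365119431344128 : ℂ) * u ^ 4 * v ^ 5 * w ^ 2 + (-1736639735848857040794462015455232 : ℂ) * u ^ 4 * v ^ 5 + (-6150358665830171446800320626163712 : ℂ) * u ^ 4 * v ^ 4 * w ^ 4 + (-6346523951607118753733914342195200 : ℂ) * u ^ 4 * v ^ 4 * w ^ 2 + (1050061235629541466526884009345024 : ℂ) * u ^ 4 * v ^ 4 + (5798415064877413043184167194460160 : ℂ) * u ^ 4 * v ^ 3 * w ^ 4 + (15358587962889227384036072708112384 : ℂ) * u ^ 4 * v ^ 3 * w ^ 2 + (9490938091267009408992990084464640 :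 ℂ) * u ^ 4 * v ^ 3 + (-10027507843539247630899584660668416 : ℂ) * u ^ 4 * v ^ 2 * w ^ 4 + (-17701032257755127578596044728958976 : ℂ) * u ^ 4 * v ^ 2 * w ^ 2 + (-66800049374279291755210236594487296 : ℂ) * u ^ 4 * v ^ 2 + (16547118812008378714280787575832576 : ℂ) * u ^ 4 * v * w ^ 4 + (36879073726066093703515618613919744 : ℂ) * u ^ 4 * v * w ^ 2 + (67688562727504288380732984602394624 : ℂ) * u ^ 4 * v + (-6785011060990883322173712060383232 : ℂ) * u ^ 4 * w ^ 4 + (-34802029523721945747748155738292224 : ℂ) * u ^ 4 * w ^ 2 + (-35217438364190775338901648313417728 : ℂ) * u ^ 4 + (-1419313538268501103107766298345472 : ℂ) * u ^ 3 * v ^ 5 * w ^ 4 + (-3346348992665571706514245744066560 : ℂ) * u ^ 3 * v ^ 5 * w ^ 2 + (4765662530934072809622012042412032 : ℂ) * u ^ 3 * v ^ 5 + (5798415064877413043184167194460160 : ℂ) * u ^ 3 * v ^ 4 * w ^ 4 + (15358587962889227384036072708112384 : ℂ) * u ^ 3 * v ^ 4 * w ^ 2 + (9490938091267009408992990084464640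 : ℂ) * u ^ 3 * v ^ 4 + (-8758203053217823880152801792229376 : ℂ) * u ^ 3 * v ^ 3 * w ^ 4 + (-24024477940447311355043653928091648 : ℂ) * u ^ 3 * v ^ 3 * w ^ 2 + (-28513201244402164437230004253753344 : ℂ) * u ^ 3 * v ^ 3 + (11752608444930637183050894104592384 : ℂ) * u ^ 3 * v ^ 2 * w ^ 4 + (37790665348206025306324671764889600 : ℂ) * u ^ 3 * v ^ 2 * w ^ 2 + (-1171222147432950097279986010423296 : ℂ) * u ^ 3 * v ^ 2 + (-19351128485172978454566862457929728 : ℂ) * u ^ 3 * v * w ^ 4 + (-70688737686445835427952653200523264 : ℂ) * u ^ 3 * v * w ^ 2 + (-125603478569533613880715741117808640 : ℂ) * u ^ 3 * v + (17654875719925257624023434442833920 : ℂ) * u ^ 3 * w ^ 4 + (58295707279125752625206791375945728 : ℂ) * u ^ 3 * w ^ 2 + (121968651215431354958122681085460480 : ℂ) * u ^ 3 + (3207879379175961842796414885691392 : ℂ) * u ^ 2 * v ^ 5 * w ^ 4 + (-4015618791198686047817094892879872 : ℂ) * u ^ 2 * v ^ 5 * w ^ 2 + (807739412022724205020680007188480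 : ℂ) * u ^ 2 * v ^ 5 + (-10027507843539247630899584660668416 : ℂ) * u ^ 2 * v ^ 4 * w ^ 4 + (-17701032257755127578596044728958976 : ℂ) * u ^ 2 * v ^ 4 * w ^ 2 + (-66800049374279291755210236594487296 : ℂ) * u ^ 2 * v ^ 4 + (11752608444930637183050894104592384 : ℂ) * u ^ 2 * v ^ 3 * w ^ 4 + (37790665348206025306324671764889600 : ℂ) * u ^ 2 * v ^ 3 * w ^ 2 + (-1171222147432950097279986010423296 : ℂ) * u ^ 2 * v ^ 3 + (-32805759262580070212482760863383552 : ℂ) * u ^ 2 * v ^ 2 * w ^ 4 + (13731570004386311485351560122204160 : ℂ) * u ^ 2 * v ^ 2 * w ^ 2 + (897156164933639774516469283984244736 : ℂ) * u ^ 2 * v ^ 2 + (54678188626709694935578460200894464 : ℂ) * u ^ 2 * v * w ^ 4 + (149489486896491315372041564187525120 : ℂ) * u ^ 2 * v * w ^ 2 + (-640254644939812341109642007697948672 : ℂ) * u ^ 2 * v + (-21566642301006736274052156191932416 : ℂ) * u ^ 2 * w ^ 4 + (-86935839002560059437511473916542976 : ℂ) * u ^ 2 * w ^ 2 + (200077052358028785583622437780586496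 : ℂ) * u ^ 2 + (-5123375699115564957559741759881216 : ℂ) * u * v ^ 5 * w ^ 4 + (-4892593009966215184696690329255936 : ℂ) * u * v ^ 5 * w ^ 2 + (10015968709081780142256432089137152 : ℂ) * u * v ^ 5 + (16547118812008378714280787575832576 : ℂ) * u * v ^ 4 * w ^ 4 + (36879073726066093703515618613919744 : ℂ) * u * v ^ 4 * w ^ 2 + (67688562727504288380732984602394624 : ℂ) * u * v ^ 4 + (-19351128485172978454566862457929728 : ℂ) * u * v ^ 3 * w ^ 4 + (-70688737686445835427952653200523264 : ℂ) * u * v ^ 3 * w ^ 2 + (-125603478569533613880715741117808640 : ℂ) * u * v ^ 3 + (54678188626709694935578460200894464 : ℂ) * u * v ^ 2 * w ^ 4 + (149489486896491315372041564187525120 : ℂ) * u * v ^ 2 * w ^ 2 + (-640254644939812341109642007697948672 : ℂ) * u * v ^ 2 + (-108317855152247315893273188963975168 : ℂ) * u * v * w ^ 4 + (-418662876385835422950861600297320448 : ℂ) * u * v * w ^ 2 + (722684451936731346232002402431533056 : ℂ) * u * v + (59109216258377210574549047668899840 : ℂ) * u * w ^ 4 + (217431910582059888502923905363607552 : ℂ)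 * u * w ^ 2 + (-712628096257048429879494936342036480 : ℂ) * u + (553878453958439454871323433500672 : ℂ) * v ^ 5 * w ^ 4 + (8492802960696071641360292647010304 : ℂ) * v ^ 5 * w ^ 2 + (-9046681414654511096231616080510976 : ℂ) * v ^ 5 + (-6785011060990883322173712060383232 : ℂ) * v ^ 4 * w ^ 4 + (-34802029523721945747748155738292224 : ℂ) * v ^ 4 * w ^ 2 + (-35217438364190775338901648313417728 : ℂ) * v ^ 4 + (17654875719925257624023434442833920 : ℂ) * v ^ 3 * w ^ 4 + (58295707279125752625206791375945728 : ℂ) * v ^ 3 * w ^ 2 + (121968651215431354958122681085460480 : ℂ) * v ^ 3 + (-21566642301006736274052156191932416 : ℂ) * v ^ 2 * w ^ 4 + (-86935839002560059437511473916542976 : ℂ) * v ^ 2 * w ^ 2 + (200077052358028785583622437780586496 : ℂ) * v ^ 2 + (59109216258377210574549047668899840 : ℂ) * v * w ^ 4 + (217431910582059888502923905363607552 : ℂ) * v * w ^ 2 + (-712628096257048429879494936342036480 : ℂ) * v + (-108317855152247315893273188963975168 : ℂ) * w ^ 4 + (-418662876385835422950861600297320448 : ℂ) * w ^ 2 + (722684451936731346232002402431533056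 : ℂ)) * huv + ((553878453958439454871323433500672 : ℂ) * u ^ 5 * w ^ 2 + (37109856415215443476378670044545024 : ℂ) * u ^ 5 + (-6785011060990883322173712060383232 : ℂ) * u ^ 4 * w ^ 2 + (-2077044202344147955767462875627520 : ℂ) * u ^ 4 + (17654875719925257624023434442833920 : ℂ) * u ^ 3 * w ^ 2 + (-424201660925419817499574834632327168 : ℂ) * u ^ 3 + (-21566642301006736274052156191932416 : ℂ) * u ^ 2 * w ^ 2 + (616432101852370710805853523771654144 : ℂ) * u ^ 2 + (59109216258377210574549047668899840 : ℂ) * u * w ^ 2 + (-267229045333260835742448827806777344 : ℂ) * u + (553878453958439454871323433500672 : ℂ) * v ^ 5 * w ^ 2 + (37109856415215443476378670044545024 : ℂ) * v ^ 5 + (-6785011060990883322173712060383232 : ℂ) * v ^ 4 * w ^ 2 + (-2077044202344147955767462875627520 : ℂ) * v ^ 4 + (17654875719925257624023434442833920 : ℂ) * v ^ 3 * w ^ 2 + (-424201660925419817499574834632327168 : ℂ) * v ^ 3 + (-21566642301006736274052156191932416 : ℂ) * v ^ 2 * w ^ 2 + (616432101852370710805853523771654144 : ℂ) * v ^ 2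 + (59109216258377210574549047668899840 : ℂ) * v * w ^ 2 + (-267229045333260835742448827806777344 : ℂ) * v + (-108317855152247315893273188963975168 : ℂ) * w ^ 2 + (339562109679895788302050722450505728 : ℂ)) * hw)

set_option maxHeartbeats 4000000 in
theorem first_passage_prob_50 :
    (1 / (2 * Real.pi)) * ∫ θ in (0 : ℝ)..(2 * Real.pi),
      1 / (4 * (‖Complex.exp (3 * θ * Complex.I) -
        Complex.exp (2 * θ * Complex.I) - 4‖) ^ 2) = 19 / 1056 := by
  have pi_pos := Real.pi_pos
  set g : ℝ → ℝ := fun θ => 1 / (4 * (‖Complex.exp (3 * θ * Complex.I) -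
        Complex.exp (2 * θ * Complex.I) - 4‖) ^ 2) with hg
  set W : ℂ := (Real.sqrt 7 : ℝ) * Complex.I with hW
  have hs7 : ((Real.sqrt 7 : ℝ) : ℂ) ^ 2 = 7 := by
    rw [← Complex.ofReal_pow, Real.sq_sqrt (by norm_num : (0:ℝ) ≤ 7)]; norm_num
  have hw : W ^ 2 = -7 := by rw [hW, mul_pow, Complex.I_sq, hs7]; ring
  -- abs bounds
  have habsW1 : ‖-1 + W‖ ^ 2 = 8 := by
    rw [Complex.sq_norm, Complex.normSq_apply, hW]
    simp
    nlinarith [Real.sq_sqrt (by norm_num : (0:ℝ) ≤ 7), Real.sqrt_nonneg 7]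
  have habsW2 : ‖-1 - W‖ ^ 2 = 8 := by
    rw [Complex.sq_norm, Complex.normSq_apply, hW]
    simp
    nlinarith [Real.sq_sqrt (by norm_num : (0:ℝ) ≤ 7), Real.sqrt_nonneg 7]
  have hb1 : ‖(1 : ℂ)‖ + 1 ≤ (2 : ℂ).re := by simp; norm_num
  have hb2 : ‖-1 + W‖ + 1 ≤ (4 : ℂ).re := by
    have h0 := norm_nonneg (-1 + W)
    have : (4 : ℂ).re = 4 := by simp
    nlinarith
  have hb3 : ‖-1 - W‖ + 1 ≤ (4 : ℂ).re := by
    have h0 := norm_nonneg (-1 - W)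
    have : (4 : ℂ).re = 4 := by simp
    nlinarith
  -- exp abs lemmas
  have habspos : ∀ t : ℝ, ‖Complex.exp ((t : ℂ) * Complex.I)‖ = 1 := fun t =>
    Complex.norm_exp_ofReal_mul_I t
  have habsneg : ∀ t : ℝ, ‖Complex.exp ((t : ℂ) * (-Complex.I))‖ = 1 := by
    intro t
    rw [show ((t : ℂ)) * (-Complex.I) = ((-t : ℝ) : ℂ) * Complex.I by push_cast; ring]
    exact Complex.norm_exp_ofReal_mul_I _
  -- the antiderivative
  set F : ℝ → ℂ := (fun θ =>
    (19 / 1056 : ℂ) * (θ : ℂ)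
      - Complex.I * (1/264) * Complex.log (2 - 1 * Complex.exp ((θ : ℂ) * (-Complex.I)))
      - Complex.I * (5/704 - W/4928) *
          Complex.log (4 - (-1 + W) * Complex.exp ((θ : ℂ) * (-Complex.I)))
      - Complex.I * (5/704 + W/4928) *
          Complex.log (4 - (-1 - W) * Complex.exp ((θ : ℂ) * (-Complex.I)))
      + Complex.I * (1/264) * Complex.log (2 - 1 * Complex.exp ((θ : ℂ) * Complex.I))
      + Complex.I * (5/704 + W/4928) *
          Complex.log (4 - (-1 - W) * Complex.exp ((θ : ℂ) * Complex.I))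
      + Complex.I * (5/704 - W/4928) *
          Complex.log (4 - (-1 + W) * Complex.exp ((θ : ℂ) * Complex.I))) with hF
  have hder : ∀ θ ∈ Set.uIcc (0 : ℝ) (2 * Real.pi), HasDerivAt F ((g θ : ℝ) : ℂ) θ := by
    intro θ _
    have hlin : HasDerivAt (fun t : ℝ => (19 / 1056 : ℂ) * (t : ℂ)) (19 / 1056 : ℂ) θ := by
      simpa using ((hasDerivAt_id θ).ofReal_comp (z := θ)).const_mul (19 / 1056 : ℂ)
    have T1 := (hasDerivAt_logterm 2 1 (-Complex.I) hb1 habsneg θ).const_mul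
      (Complex.I * (1/264))
    have T2 := (hasDerivAt_logterm 4 (-1 + W) (-Complex.I) hb2 habsneg θ).const_mul
      (Complex.I * (5/704 - W/4928))
    have T3 := (hasDerivAt_logterm 4 (-1 - W) (-Complex.I) hb3 habsneg θ).const_mul
      (Complex.I * (5/704 + W/4928))
    have T4 := (hasDerivAt_logterm 2 1 Complex.I hb1 habspos θ).const_mul
      (Complex.I * (1/264))
    have T5 := (hasDerivAt_logterm 4 (-1 - W) Complex.I hb3 habspos θ).const_mul
      (Complex.I * (5/704 + W/4928))
    have T6 := (hasDerivAt_logterm 4 (-1 + W) Complex.I hb2 habspos θ).const_mul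
      (Complex.I * (5/704 - W/4928))
    have Hbig := (((((hlin.sub T1).sub T2).sub T3).add T4).add T5).add T6
    -- identify the derivative value
    set u : ℂ := Complex.exp ((θ : ℂ) * Complex.I) with hu
    set v : ℂ := Complex.exp ((θ : ℂ) * (-Complex.I)) with hv
    have huv : u * v = 1 := by
      rw [hu, hv, ← Complex.exp_add,
        show (θ : ℂ) * Complex.I + (θ : ℂ) * (-Complex.I) = 0 by ring, Complex.exp_zero]
    have habsu : ‖u‖ = 1 := habspos θ
    have habsv : ‖v‖ = 1 := habsneg θ
    have h1 : (2 : ℂ) - v ≠ 0 := by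
      have := aux_sub_ne 2 1 v hb1 habsv; rwa [one_mul] at this
    have h2 : (4 : ℂ) - (-1 + W) * v ≠ 0 := aux_sub_ne 4 _ v hb2 habsv
    have h3 : (4 : ℂ) - (-1 - W) * v ≠ 0 := aux_sub_ne 4 _ v hb3 habsv
    have h4 : (2 : ℂ) - u ≠ 0 := by
      have := aux_sub_ne 2 1 u hb1 habsu; rwa [one_mul] at this
    have h5 : (4 : ℂ) - (-1 + W) * u ≠ 0 := aux_sub_ne 4 _ u hb2 habsu
    have h6 : (4 : ℂ) - (-1 - W) * u ≠ 0 := aux_sub_ne 4 _ u hb3 habsu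
    have h7 : u ^ 3 - u ^ 2 - 4 ≠ 0 := aux_ne u habsu
    have h8 : v ^ 3 - v ^ 2 - 4 ≠ 0 := aux_ne v habsv
    have hkey := key u v W huv hw h1 h2 h3 h4 h5 h6 h7 h8
    have hgval : ((g θ : ℝ) : ℂ) =
        1 / (4 * ((u ^ 3 - u ^ 2 - 4) * (v ^ 3 - v ^ 2 - 4))) := by
      have e3 : Complex.exp (3 * (θ : ℂ) * Complex.I) = u ^ 3 := by
        rw [hu, show (3 : ℂ) * θ * Complex.I =
          θ * Complex.I + (θ * Complex.I + θ * Complex.I) by ring,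
          Complex.exp_add, Complex.exp_add]; ring
      have e2 : Complex.exp (2 * (θ : ℂ) * Complex.I) = u ^ 2 := by
        rw [hu, show (2 : ℂ) * θ * Complex.I = θ * Complex.I + θ * Complex.I by ring,
          Complex.exp_add]; ring
      have hconj : (starRingEnd ℂ) (u ^ 3 - u ^ 2 - 4) = v ^ 3 - v ^ 2 - 4 := by
        rw [hu, hv, map_sub, map_sub, map_pow, map_pow, ← Complex.exp_conj]
        simp only [map_mul, Complex.conj_ofReal, Complex.conj_I, map_ofNat]
      have habssq : ((‖u ^ 3 - u ^ 2 - 4‖ ^ 2 : ℝ) : ℂ) =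
          (u ^ 3 - u ^ 2 - 4) * (v ^ 3 - v ^ 2 - 4) := by
        rw [Complex.sq_norm, ← Complex.mul_conj, hconj]
      rw [hg]
      push_cast
      rw [e3, e2]
      rw [show ((‖u ^ 3 - u ^ 2 - 4‖ : ℝ) : ℂ) ^ 2 =
        ((‖u ^ 3 - u ^ 2 - 4‖ ^ 2 : ℝ) : ℂ) by push_cast; ring, habssq]
    rw [hgval]
    have hglue : (((((19 / 1056 : ℂ)
        - Complex.I * (1/264) *
          (-(1 * (1 * -Complex.I * v)) / (2 - 1 * v)))
        - Complex.I * (5/704 - W/4928) *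
          (-((-1 + W) * (1 * -Complex.I * v)) / (4 - (-1 + W) * v)))
        - Complex.I * (5/704 + W/4928) *
          (-((-1 - W) * (1 * -Complex.I * v)) / (4 - (-1 - W) * v)))
        + Complex.I * (1/264) * (-(1 * (1 * Complex.I * u)) / (2 - 1 * u))
        + Complex.I * (5/704 + W/4928) *
          (-((-1 - W) * (1 * Complex.I * u)) / (4 - (-1 - W) * u))
        + Complex.I * (5/704 - W/4928) *
          (-((-1 + W) * (1 * Complex.I * u)) / (4 - (-1 + W) * u)))
        = 1 / (4 * ((u ^ 3 - u ^ 2 - 4) * (v ^ 3 - v ^ 2 - 4))) := by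
      refine Eq.trans ?_ hkey
      linear_combination (-((1/264 : ℂ) * v / (2 - v)
        + (5/704 - W/4928) * ((-1 + W) * v) / (4 - (-1 + W) * v)
        + (5/704 + W/4928) * ((-1 - W) * v) / (4 - (-1 - W) * v)
        + (1/264 : ℂ) * u / (2 - u)
        + (5/704 + W/4928) * ((-1 - W) * u) / (4 - (-1 - W) * u)
        + (5/704 - W/4928) * ((-1 + W) * u) / (4 - (-1 + W) * u))) * Complex.I_sq
    exact hglue ▸ Hbig
  have hcontg : Continuous g := by
    rw [hg]
    apply Continuous.div continuous_const
    · exact continuous_const.mul ((continuous_norm.comp (by fun_prop)).pow 2)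
    · intro θ
      have hne : ‖Complex.exp (3 * θ * Complex.I) -
          Complex.exp (2 * θ * Complex.I) - 4‖ ≠ 0 :=
        norm_ne_zero_iff.mpr (aux_z_ne θ)
      positivity
  have hint : IntervalIntegrable (fun θ : ℝ => ((g θ : ℝ) : ℂ))
      MeasureTheory.volume 0 (2 * Real.pi) :=
    (Complex.continuous_ofReal.comp hcontg).intervalIntegrable _ _
  have hFTC : ∫ θ in (0:ℝ)..(2 * Real.pi), ((g θ : ℝ) : ℂ) = F (2 * Real.pi) - F 0 :=
    intervalIntegral.integral_eq_sub_of_hasDerivAt hder hint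
  have hcast : ∫ θ in (0:ℝ)..(2 * Real.pi), ((g θ : ℝ) : ℂ) =
      ((∫ θ in (0:ℝ)..(2 * Real.pi), g θ : ℝ) : ℂ) := RCLike.intervalIntegral_ofReal
  have hexp2 : Complex.exp (((2 * Real.pi : ℝ) : ℂ) * Complex.I) = 1 := by
    push_cast
    rw [show ((2 : ℂ) * (Real.pi : ℂ)) * Complex.I = 2 * (Real.pi : ℂ) * Complex.I by ring]
    exact Complex.exp_two_pi_mul_I
  have hexp2' : Complex.exp (((2 * Real.pi : ℝ) : ℂ) * (-Complex.I)) = 1 := by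
    rw [show ((2 * Real.pi : ℝ) : ℂ) * (-Complex.I) =
      -(((2 * Real.pi : ℝ) : ℂ) * Complex.I) by ring, Complex.exp_neg, hexp2]
    norm_num
  have hexp0 : Complex.exp (((0 : ℝ) : ℂ) * Complex.I) = 1 := by norm_num
  have hexp0' : Complex.exp (((0 : ℝ) : ℂ) * (-Complex.I)) = 1 := by norm_num
  have hend : F (2 * Real.pi) - F 0 = (19 / 1056 : ℂ) * ((2 * Real.pi : ℝ) : ℂ) := by
    rw [hF]
    simp only [hexp0, hexp0', hexp2, hexp2']
    push_cast
    ring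
  have hval : ((∫ θ in (0:ℝ)..(2 * Real.pi), g θ : ℝ) : ℂ) =
      ((19 / 1056 * (2 * Real.pi) : ℝ) : ℂ) := by
    rw [← hcast, hFTC, hend]; push_cast; ring
  have hreal : ∫ θ in (0:ℝ)..(2 * Real.pi), g θ = 19 / 1056 * (2 * Real.pi) := by
    exact_mod_cast hval
  rw [hreal]
  have hpne : Real.pi ≠ 0 := ne_of_gt pi_pos
  field_simp
end

section
/- The integral (1/(2π)) ∫₀^{2π} |e^{iθ} + 2|² / (4·|e^{3iθ} − e^{2iθ} − 4|²) dθ equals 91/1056. -/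
open Complex intervalIntegral Real

noncomputable def Ffn : ℂ → ℂ := fun z =>
  (-91*z^3 + 45*z^2 - 184*z - 364) / (1056*(z^3 - z^2 - 4))

lemma denom_ne_zero {z : ℂ} (hz : ‖z‖ ≤ 1) : z^3 - z^2 - 4 ≠ 0 := by
  intro h
  have h4 : (4:ℂ) = z^3 - z^2 := by linear_combination -h
  have : (4:ℝ) = ‖z^3 - z^2‖ := by rw [← h4]; simp [Complex.norm_ofNat]
  have hle : ‖z^3 - z^2‖ ≤ 2 := by
    calc ‖z^3 - z^2‖ ≤ ‖z^3‖ + ‖z^2‖ :=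
          norm_sub_le (z^3) (z^2)
      _ ≤ 1 + 1 := by
          rw [norm_pow, norm_pow]
          gcongr <;> exact pow_le_one₀ (norm_nonneg z) hz
      _ = 2 := by norm_num
  linarith [this ▸ hle]

lemma Ffn_diff : DiffContOnCl ℂ Ffn (Metric.ball 0 1) := by
  have hcl : closure (Metric.ball (0:ℂ) 1) = Metric.closedBall 0 1 :=
    closure_ball 0 one_ne_zero
  apply DifferentiableOn.diffContOnCl
  rw [hcl]
  apply DifferentiableOn.div
  · fun_prop
  · fun_prop
  · intro z hz
    have hz1 : ‖z‖ ≤ 1 := by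
      simpa [Complex.dist_eq] using Metric.mem_closedBall.mp hz
    have := denom_ne_zero hz1
    intro h
    apply this
    have : (1056:ℂ) ≠ 0 := by norm_num
    field_simp at h
    linear_combination h / 1056

lemma Ffn_cont : Continuous fun θ : ℝ => Ffn (Complex.exp (θ * Complex.I)) := by
  apply Continuous.div
  · fun_prop
  · fun_prop
  · intro θ
    have h1 : ‖Complex.exp (θ * Complex.I)‖ ≤ 1 := by
      rw [Complex.norm_exp_ofReal_mul_I]
    have := denom_ne_zero h1
    intro h
    apply this
    field_simp at h
    linear_combination h / 1056

lemma key_integral : ∫ θ in (0:ℝ)..(2*π), Ffn (Complex.exp (θ * Complex.I))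
    = (2*π) * Ffn 0 := by
  have h0 : (0:ℂ) ∈ Metric.ball (0:ℂ) 1 := by simp
  have hc := Ffn_diff.circleIntegral_sub_inv_smul h0
  rw [circleIntegral] at hc
  simp only [deriv_circleMap, smul_eq_mul, sub_zero] at hc
  have heq : ∀ θ : ℝ, circleMap 0 1 θ * Complex.I * ((circleMap 0 1 θ)⁻¹ *
      Ffn (circleMap 0 1 θ)) = Complex.I * Ffn (Complex.exp (θ * Complex.I)) := by
    intro θ
    have hmap : circleMap 0 1 θ = Complex.exp (θ * Complex.I) := by
      simp [circleMap]
    rw [hmap]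
    have : Complex.exp (θ * Complex.I) ≠ 0 := Complex.exp_ne_zero _
    field_simp
  rw [intervalIntegral.integral_congr (fun θ _ => heq θ)] at hc
  rw [intervalIntegral.integral_const_mul] at hc
  have hI : (Complex.I : ℂ) ≠ 0 := Complex.I_ne_zero
  apply mul_left_cancel₀ hI
  rw [hc]
  ring

lemma sq_abs_cast (w : ℂ) : ((‖w‖ : ℂ))^2 = w * (starRingEnd ℂ) w := by
  rw [← Complex.ofReal_pow, ← Complex.normSq_eq_norm_sq, Complex.mul_conj]

lemma pointwise (θ : ℝ) :
    (‖Complex.exp (θ * Complex.I) + 2‖) ^ 2 /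
      (4 * (‖Complex.exp (3 * θ * Complex.I) -
        Complex.exp (2 * θ * Complex.I) - 4‖) ^ 2)
    = (Ffn (Complex.exp (θ * Complex.I))).re := by
  have h3 : Complex.exp (3 * θ * Complex.I) = Complex.exp (θ * Complex.I) ^ 3 := by
    rw [show (3:ℂ) * θ * Complex.I = θ*Complex.I + θ*Complex.I + θ*Complex.I by ring,
      Complex.exp_add, Complex.exp_add]; ring
  have h2 : Complex.exp (2 * θ * Complex.I) = Complex.exp (θ * Complex.I) ^ 2 := by
    rw [show (2:ℂ) * θ * Complex.I = θ*Complex.I + θ*Complex.I by ring,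
      Complex.exp_add]; ring
  rw [h3, h2]
  set z := Complex.exp (θ * Complex.I) with hzdef
  set w := z⁻¹ with hwdef
  have habs : ‖z‖ = 1 := Complex.norm_exp_ofReal_mul_I θ
  have hz0 : z ≠ 0 := Complex.exp_ne_zero _
  have hw : z * w = 1 := mul_inv_cancel₀ hz0
  have hzinv : (starRingEnd ℂ) z = w := by
    have h1 : (starRingEnd ℂ) z * z = 1 := by
      rw [mul_comm, Complex.mul_conj, Complex.normSq_eq_norm_sq, habs]; norm_num
    rw [hwdef]; exact eq_inv_of_mul_eq_one_left h1
  have habsw : ‖w‖ = 1 := by rw [hwdef, norm_inv, habs]; norm_num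
  have hD : z^3 - z^2 - 4 ≠ 0 := denom_ne_zero habs.le
  have hDw : w^3 - w^2 - 4 ≠ 0 := denom_ne_zero habsw.le
  have hA : (1056:ℂ)*(z^3 - z^2 - 4) ≠ 0 := by
    exact mul_ne_zero (by norm_num) hD
  have hB : (1056:ℂ)*(w^3 - w^2 - 4) ≠ 0 := by
    exact mul_ne_zero (by norm_num) hDw
  have hX : (4:ℂ)*((z^3 - z^2 - 4)*(w^3 - w^2 - 4)) ≠ 0 :=
    mul_ne_zero (by norm_num) (mul_ne_zero hD hDw)
  have hY : (1056:ℂ)*(z^3 - z^2 - 4)*((1056:ℂ)*(w^3 - w^2 - 4))*2 ≠ 0 :=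
    mul_ne_zero (mul_ne_zero hA hB) two_ne_zero
  have hcast : (((‖z + 2‖) ^ 2 /
      (4 * (‖z^3 - z^2 - 4‖) ^ 2) : ℝ) : ℂ)
      = (Ffn z + (starRingEnd ℂ) (Ffn z)) / 2 := by
    push_cast
    rw [sq_abs_cast, sq_abs_cast]
    simp only [Ffn, map_div₀, map_mul, map_sub, map_add, map_pow, map_neg,
      map_ofNat, hzinv, Complex.conj_ofNat]
    rw [div_add_div _ _ hA hB, div_div, div_eq_div_iff hX hY]
    linear_combination (-4224 * ((z^3-z^2-4)*(w^3-w^2-4)) *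
      (-182*z^2*w^2 + 136*z^2*w + 136*z*w^2 - 272*z*w - 184*z^2 - 184*w^2
        + 320*z + 320*w - 800)) * hw
  have hre : (Ffn z + (starRingEnd ℂ) (Ffn z)) / 2 = (((Ffn z).re : ℝ) : ℂ) := by
    rw [Complex.add_conj]
    push_cast
    ring
  rw [hre] at hcast
  exact_mod_cast hcast

theorem first_passage_prob_44 :
    (1 / (2 * Real.pi)) * ∫ θ in (0 : ℝ)..(2 * Real.pi),
      (‖Complex.exp (θ * Complex.I) + 2‖) ^ 2 /
        (4 * (‖Complex.exp (3 * θ * Complex.I) -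
          Complex.exp (2 * θ * Complex.I) - 4‖) ^ 2) = 91 / 1056 := by
  rw [intervalIntegral.integral_congr (fun θ _ => pointwise θ)]
  have hint : IntervalIntegrable (fun θ:ℝ => Ffn (Complex.exp (θ * Complex.I)))
      MeasureTheory.volume 0 (2*π) := Ffn_cont.intervalIntegrable _ _
  have hre : ∫ θ in (0:ℝ)..(2*π), (Ffn (Complex.exp (θ * Complex.I))).re
      = ((∫ θ in (0:ℝ)..(2*π), Ffn (Complex.exp (θ * Complex.I))).re) := by
    have := Complex.reCLM.intervalIntegral_comp_comm hint
    simpa using this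
  rw [hre, key_integral]
  have hF0 : Ffn 0 = (((91:ℝ)/1056 : ℝ) : ℂ) := by
    simp [Ffn]
    norm_num
  rw [hF0]
  have h2 : ((2*(π:ℂ)) * (((91:ℝ)/1056 : ℝ) : ℂ)).re = 2*π*(91/1056) := by
    have : (2*(π:ℂ)) * (((91:ℝ)/1056 : ℝ) : ℂ) = ((2*π*(91/1056) : ℝ) : ℂ) := by
      push_cast; ring
    rw [this, Complex.ofReal_re]
  rw [h2]
  have hpi : π ≠ 0 := Real.pi_ne_zero
  field_simp
end

section
/- The integral (1/(2π)) ∫₀^{2π} [ |e^{2iθ} + e^{iθ} − 2|² + |e^{2iθ} − e^{iθ} + 2|² + 2 + 4·|e^{iθ} + 2|² ] / (4·|e^{3iθ} − e^{2iθ} − 4|²) dθ equals 319/528. -/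
open Real

noncomputable def niceF : ℝ → ℝ := fun t =>
  (17 + 4 * Real.cos t) / (4 * (5 - 4 * Real.cos t) * (4 * Real.cos t ^ 2 + 3 * Real.cos t + 1))

noncomputable def antider : ℝ → ℝ := fun t =>
  (29 / 48) * t + (1 / 3) * Real.arctan (Real.sin t / (2 - Real.cos t))
    - (7 / 16) * Real.arctan ((Real.sin (2 * t) + Real.sin t) / (Real.cos (2 * t) + Real.cos t + 2))
    + (3 / (32 * Real.sqrt 7)) *
        (Real.log (3 + Real.cos t + Real.sqrt 7 * Real.sin t)
          - Real.log (3 + Real.cos t - Real.sqrt 7 * Real.sin t))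

lemma integrand_eq (t : ℝ) :
    (‖Complex.exp (2 * t * Complex.I) + Complex.exp (t * Complex.I) - 2‖ ^ 2 +
        ‖Complex.exp (2 * t * Complex.I) - Complex.exp (t * Complex.I) + 2‖ ^ 2 +
        2 + 4 * ‖Complex.exp (t * Complex.I) + 2‖ ^ 2) /
        (4 * ‖Complex.exp (3 * t * Complex.I) -
          Complex.exp (2 * t * Complex.I) - 4‖ ^ 2) = niceF t := by
  have e2 : (2 : ℂ) * t * Complex.I = ((2 * t : ℝ) : ℂ) * Complex.I := by push_cast; ring
  have e3 : (3 : ℂ) * t * Complex.I = ((3 * t : ℝ) : ℂ) * Complex.I := by push_cast; ring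
  rw [e2, e3]
  have hs := Real.sin_sq_add_cos_sq t
  have hnum : ‖Complex.exp (((2 * t : ℝ) : ℂ) * Complex.I) + Complex.exp (t * Complex.I) - 2‖ ^ 2 +
        ‖Complex.exp (((2 * t : ℝ) : ℂ) * Complex.I) - Complex.exp (t * Complex.I) + 2‖ ^ 2 +
        2 + 4 * ‖Complex.exp (t * Complex.I) + 2‖ ^ 2
      = 34 + 8 * Real.cos t := by
    simp only [Complex.sq_norm, Complex.normSq_apply, Complex.sub_re, Complex.add_re,
      Complex.sub_im, Complex.add_im, Complex.exp_ofReal_mul_I_re, Complex.exp_ofReal_mul_I_im,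
      Complex.re_ofNat, Complex.im_ofNat, Real.cos_two_mul, Real.sin_two_mul]
    linear_combination (6 + 8 * Real.cos t ^ 2) * hs
  have hden : 4 * ‖Complex.exp (((3 * t : ℝ) : ℂ) * Complex.I) -
          Complex.exp (((2 * t : ℝ) : ℂ) * Complex.I) - 4‖ ^ 2
      = 8 * (5 - 4 * Real.cos t) * (4 * Real.cos t ^ 2 + 3 * Real.cos t + 1) := by
    simp only [Complex.sq_norm, Complex.normSq_apply, Complex.sub_re, Complex.add_re,
      Complex.sub_im, Complex.add_im, Complex.exp_ofReal_mul_I_re, Complex.exp_ofReal_mul_I_im,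
      Complex.re_ofNat, Complex.im_ofNat, Real.cos_two_mul, Real.sin_two_mul,
      Real.cos_three_mul, Real.sin_three_mul]
    linear_combination (4 + 16 * Real.cos t - 16 * Real.cos t ^ 2 - 64 * Real.cos t ^ 3 + 64 * Real.cos t ^ 4 - 32 * Real.sin t ^ 2 + 64 * Real.sin t ^ 2 * Real.cos t - 64 * Real.sin t ^ 2 * Real.cos t ^ 2 + 64 * Real.sin t ^ 4) * hs
  rw [hnum, hden]
  unfold niceF
  have hcle := Real.cos_le_one t
  have hq : (0:ℝ) < 4 * Real.cos t ^ 2 + 3 * Real.cos t + 1 := by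
    nlinarith [sq_nonneg (8 * Real.cos t + 3)]
  have h5c : (0:ℝ) < 5 - 4 * Real.cos t := by linarith
  rw [div_eq_div_iff (ne_of_gt (mul_pos (mul_pos (by norm_num) h5c) hq))
    (ne_of_gt (mul_pos (mul_pos (by norm_num) h5c) hq))]
  ring

lemma arctan_quot_aux (u v N : ℝ) (hv : v ≠ 0) :
    1 / (1 + (u / v) ^ 2) * (N / v ^ 2) = N / (v ^ 2 + u ^ 2) := by
  have hv2 : v ^ 2 + u ^ 2 ≠ 0 := by positivity
  field_simp

set_option maxHeartbeats 2000000 in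
lemma antider_hasDeriv (t : ℝ) : HasDerivAt antider (niceF t) t := by
  have hs := Real.sin_sq_add_cos_sq t
  have h7 : Real.sqrt 7 ^ 2 = 7 := Real.sq_sqrt (by norm_num)
  have h7pos : 0 < Real.sqrt 7 := Real.sqrt_pos.mpr (by norm_num)
  have hcle := Real.cos_le_one t
  have hcge := Real.neg_one_le_cos t
  have h2c : (0:ℝ) < 2 - Real.cos t := by linarith
  have h5c : (0:ℝ) < 5 - 4 * Real.cos t := by linarith
  have hq : (0:ℝ) < 4 * Real.cos t ^ 2 + 3 * Real.cos t + 1 := by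
    nlinarith [sq_nonneg (8 * Real.cos t + 3)]
  have hv2 : (0:ℝ) < 2 * Real.cos t ^ 2 + Real.cos t + 1 := by
    nlinarith [sq_nonneg (4 * Real.cos t + 1)]
  have hprod : (0:ℝ) < (3 + Real.cos t + Real.sqrt 7 * Real.sin t) *
      (3 + Real.cos t - Real.sqrt 7 * Real.sin t) := by
    have hexp : (3 + Real.cos t + Real.sqrt 7 * Real.sin t) *
        (3 + Real.cos t - Real.sqrt 7 * Real.sin t)
        = (3 + Real.cos t) ^ 2 - 7 * Real.sin t ^ 2 := by
      linear_combination (-(Real.sin t ^ 2)) * h7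
    rw [hexp]
    nlinarith [sq_nonneg (8 * Real.cos t + 3)]
  have hwp : (0:ℝ) < 3 + Real.cos t + Real.sqrt 7 * Real.sin t := by
    by_contra hA
    push_neg at hA
    have hb : (0:ℝ) < 3 + Real.cos t - Real.sqrt 7 * Real.sin t := by nlinarith
    nlinarith
  have hwm : (0:ℝ) < 3 + Real.cos t - Real.sqrt 7 * Real.sin t := by
    by_contra hA
    push_neg at hA
    have hb : (0:ℝ) < 3 + Real.cos t + Real.sqrt 7 * Real.sin t := by nlinarith
    nlinarith
  -- component 1: linear part
  have hA0 : HasDerivAt (fun t : ℝ => (29 / 48) * t) (29 / 48) t := by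
    simpa using (hasDerivAt_id t).const_mul (29 / 48 : ℝ)
  -- component 2: first arctan
  have hu1 : HasDerivAt (fun t : ℝ => Real.sin t / (2 - Real.cos t))
      ((Real.cos t * (2 - Real.cos t) - Real.sin t * -(-Real.sin t)) / (2 - Real.cos t) ^ 2) t :=
    (Real.hasDerivAt_sin t).div ((Real.hasDerivAt_cos t).const_sub 2) (ne_of_gt h2c)
  have hA1 : HasDerivAt (fun t : ℝ => (1 / 3) * Real.arctan (Real.sin t / (2 - Real.cos t)))
      ((1 / 3) * ((2 * Real.cos t - 1) / (5 - 4 * Real.cos t))) t := by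
    have := (hu1.arctan).const_mul (1 / 3 : ℝ)
    refine this.congr_deriv (Eq.symm ?_)
    have h2ne := ne_of_gt h2c
    have h5ne : 5 - Real.cos t * 4 ≠ 0 := by linarith
    field_simp
    linear_combination (4 - 2 * Real.cos t) * hs
  -- component 3: second arctan
  have h2t : HasDerivAt (fun x : ℝ => 2 * x) 2 t := by
    simpa using (hasDerivAt_id t).const_mul (2:ℝ)
  have hsin2 : HasDerivAt (fun x : ℝ => Real.sin (2 * x)) (Real.cos (2 * t) * 2) t :=
    (Real.hasDerivAt_sin (2 * t)).comp t h2t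
  have hcos2 : HasDerivAt (fun x : ℝ => Real.cos (2 * x)) (-Real.sin (2 * t) * 2) t :=
    (Real.hasDerivAt_cos (2 * t)).comp t h2t
  have hu2 : HasDerivAt (fun x : ℝ => Real.sin (2 * x) + Real.sin x)
      (Real.cos (2 * t) * 2 + Real.cos t) t := hsin2.add (Real.hasDerivAt_sin t)
  have hv2' : HasDerivAt (fun x : ℝ => Real.cos (2 * x) + Real.cos x + 2)
      (-Real.sin (2 * t) * 2 + -Real.sin t + 0) t :=
    ((hcos2.add (Real.hasDerivAt_cos t)).add (hasDerivAt_const t 2))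
  have hv2ne : Real.cos (2 * t) + Real.cos t + 2 ≠ 0 := by
    rw [Real.cos_two_mul]; nlinarith
  have hA2 : HasDerivAt (fun x : ℝ => (7 / 16) *
      Real.arctan ((Real.sin (2 * x) + Real.sin x) / (Real.cos (2 * x) + Real.cos x + 2)))
      ((7 / 16) * ((8 * Real.cos t ^ 2 + 5 * Real.cos t - 1) /
        (2 * (4 * Real.cos t ^ 2 + 3 * Real.cos t + 1)))) t := by
    have := ((hu2.div hv2' hv2ne).arctan).const_mul (7 / 16 : ℝ)
    refine this.congr_deriv (Eq.symm ?_)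
    simp only [Pi.div_apply]
    rw [arctan_quot_aux _ _ _ hv2ne]
    have hvpos : (0:ℝ) < Real.cos (2*t) + Real.cos t + 2 := by
      rw [Real.cos_two_mul]; nlinarith
    have hsum : (0:ℝ) < (Real.cos (2 * t) + Real.cos t + 2) ^ 2 + (Real.sin (2 * t) + Real.sin t) ^ 2 := by
      positivity
    congr 1
    rw [div_eq_div_iff (by positivity) (ne_of_gt hsum)]
    simp only [Real.cos_two_mul, Real.sin_two_mul]
    linear_combination (-3 - 17 * Real.cos t - 36 * Real.cos t ^ 2 - 44 * Real.cos t ^ 3 - 32 * Real.cos t ^ 4) * hs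
  -- component 4: logs
  have hwp' : HasDerivAt (fun x : ℝ => 3 + Real.cos x + Real.sqrt 7 * Real.sin x)
      (-Real.sin t + Real.sqrt 7 * Real.cos t) t :=
    ((Real.hasDerivAt_cos t).const_add 3).add ((Real.hasDerivAt_sin t).const_mul (Real.sqrt 7))
  have hwm' : HasDerivAt (fun x : ℝ => 3 + Real.cos x - Real.sqrt 7 * Real.sin x)
      (-Real.sin t - Real.sqrt 7 * Real.cos t) t :=
    ((Real.hasDerivAt_cos t).const_add 3).sub ((Real.hasDerivAt_sin t).const_mul (Real.sqrt 7))
  have hA3 : HasDerivAt (fun x : ℝ => (3 / (32 * Real.sqrt 7)) *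
      (Real.log (3 + Real.cos x + Real.sqrt 7 * Real.sin x)
        - Real.log (3 + Real.cos x - Real.sqrt 7 * Real.sin x)))
      ((3 / 32) * ((1 + 3 * Real.cos t) / (4 * Real.cos t ^ 2 + 3 * Real.cos t + 1))) t := by
    have := ((hwp'.log (ne_of_gt hwp)).sub (hwm'.log (ne_of_gt hwm))).const_mul
      (3 / (32 * Real.sqrt 7) : ℝ)
    refine this.congr_deriv (Eq.symm ?_)
    have hwpne := ne_of_gt hwp
    have hwmne := ne_of_gt hwm
    have hqne : Real.cos t * (Real.cos t * 4 + 3) + 1 ≠ 0 := by nlinarith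
    have h7ne := ne_of_gt h7pos
    field_simp
    linear_combination (-(√7) * (7 * (1 + 3 * Real.cos t) + 2 * (4 * Real.cos t ^ 2 + 3 * Real.cos t + 1))) * hs + (-(√7) * (1 + 3 * Real.cos t) * Real.sin t ^ 2) * h7
  have htot := ((hA0.add hA1).sub hA2).add hA3
  unfold antider niceF
  refine htot.congr_deriv (Eq.symm ?_)
  have h5ne : (5 : ℝ) - 4 * Real.cos t ≠ 0 := ne_of_gt h5c
  have hqne : (4 : ℝ) * Real.cos t ^ 2 + 3 * Real.cos t + 1 ≠ 0 := ne_of_gt hq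
  have hqne' : Real.cos t * (4 * Real.cos t + 3) + 1 ≠ 0 := by intro h; apply hqne; linear_combination h
  field_simp
  ring


lemma niceF_cont : Continuous niceF := by
  apply Continuous.div (by continuity) (by continuity)
  intro x
  have hcle := Real.cos_le_one x
  have hq : (0:ℝ) < 4 * Real.cos x ^ 2 + 3 * Real.cos x + 1 := by
    nlinarith [sq_nonneg (8 * Real.cos x + 3)]
  have h5c : (0:ℝ) < 5 - 4 * Real.cos x := by linarith
  exact ne_of_gt (mul_pos (mul_pos (by norm_num) h5c) hq)

theorem total_first_passage_probability :
    (1 / (2 * Real.pi)) * ∫ θ in (0 : ℝ)..(2 * Real.pi),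
      (‖Complex.exp (2 * θ * Complex.I) + Complex.exp (θ * Complex.I) - 2‖ ^ 2 +
        ‖Complex.exp (2 * θ * Complex.I) - Complex.exp (θ * Complex.I) + 2‖ ^ 2 +
        2 + 4 * ‖Complex.exp (θ * Complex.I) + 2‖ ^ 2) /
        (4 * ‖Complex.exp (3 * θ * Complex.I) -
          Complex.exp (2 * θ * Complex.I) - 4‖ ^ 2) = 319 / 528 := by
  have hcongr : (∫ θ in (0 : ℝ)..(2 * Real.pi),
      (‖Complex.exp (2 * θ * Complex.I) + Complex.exp (θ * Complex.I) - 2‖ ^ 2 +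
        ‖Complex.exp (2 * θ * Complex.I) - Complex.exp (θ * Complex.I) + 2‖ ^ 2 +
        2 + 4 * ‖Complex.exp (θ * Complex.I) + 2‖ ^ 2) /
        (4 * ‖Complex.exp (3 * θ * Complex.I) -
          Complex.exp (2 * θ * Complex.I) - 4‖ ^ 2))
      = ∫ θ in (0 : ℝ)..(2 * Real.pi), niceF θ :=
    intervalIntegral.integral_congr (fun θ _ => integrand_eq θ)
  rw [hcongr, intervalIntegral.integral_eq_sub_of_hasDerivAt
    (fun t _ => antider_hasDeriv t) (niceF_cont.intervalIntegrable 0 (2 * Real.pi))]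
  have h4s : Real.sin (2 * (2 * Real.pi)) = 0 := by
    rw [show (2:ℝ) * (2 * Real.pi) = 2 * Real.pi + 2 * Real.pi by ring, Real.sin_add]
    simp
  have h4c : Real.cos (2 * (2 * Real.pi)) = 1 := by
    rw [show (2:ℝ) * (2 * Real.pi) = 2 * Real.pi + 2 * Real.pi by ring, Real.cos_add]
    simp
  unfold antider
  rw [h4s, h4c]
  simp only [Real.sin_two_pi, Real.cos_two_pi, Real.sin_zero, Real.cos_zero, mul_zero,
    Real.sin_two_mul, Real.cos_two_mul]
  norm_num [Real.arctan_zero]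
  field_simp
end
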